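/- Let c ∈ ℝ^n be the concatenation of vectors c^1,…,c^T, each with at least one negative entry, let p > 1, q > 1, a > 0, r = 1/(p−1), s = 1/(q−1). Define c̃^t entrywise by max(−c_i, 0), and set σ^t = a·‖c̃^t‖_{r+1}^s / (∑_{u=1}^T ‖c̃^u‖_{r+1}^{s+1})^{1/q}. Then θ̂ with blocks θ̂^t = σ^t·(c̃^t)^r / ‖c̃^t‖_{r+1}^r minimizes c'θ over {θ ≥ 0 : (∑_{t} ‖θ^t‖_p^q)^{1/q} ≤ a}, and the minimum value equals −a·(∑_t ‖c̃^t‖_{r+1}^{s+1})^{1/(s+1)}. -/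

import Mathlib

open Finset Real

theorem stmt_4 {T : ℕ} (nv : Fin T → ℕ) (p q a r s : ℝ) (hp : 1 < p) (hq : 1 < q)
    (ha : 0 < a) (hr : r = 1 / (p - 1)) (hs : s = 1 / (q - 1))
    (c : (t : Fin T) → Fin (nv t) → ℝ) (hneg : ∀ t, ∃ i, c t i < 0)
    (ct : (t : Fin T) → Fin (nv t) → ℝ) (hct : ∀ t i, ct t i = max (-(c t i)) 0)
    (Nc : Fin T → ℝ) (hNc : ∀ t, Nc t = (∑ i, ct t i ^ (r + 1)) ^ (1 / (r + 1)))
    (σ : Fin T → ℝ)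
    (hσ : ∀ t, σ t = a * Nc t ^ s / (∑ u, Nc u ^ (s + 1)) ^ (1 / q))
    (θh : (t : Fin T) → Fin (nv t) → ℝ)
    (hθh : ∀ t i, θh t i = σ t * ct t i ^ r / Nc t ^ r) :
    IsLeast ((fun θ : (t : Fin T) → Fin (nv t) → ℝ => ∑ t, ∑ i, c t i * θ t i) ''
        {θ | (∀ t i, 0 ≤ θ t i) ∧
          (∑ t, ((∑ i, |θ t i| ^ p) ^ (1 / p)) ^ q) ^ (1 / q) ≤ a})
      (-(a * (∑ t, Nc t ^ (s + 1)) ^ (1 / (s + 1)))) ∧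
      θh ∈ {θ : (t : Fin T) → Fin (nv t) → ℝ |
          (∀ t i, 0 ≤ θ t i) ∧
          (∑ t, ((∑ i, |θ t i| ^ p) ^ (1 / p)) ^ q) ^ (1 / q) ≤ a} ∧
      ∑ t, ∑ i, c t i * θh t i = -(a * (∑ t, Nc t ^ (s + 1)) ^ (1 / (s + 1))) := by
  have hp0 : (0:ℝ) < p := lt_trans one_pos hp
  have hq0 : (0:ℝ) < q := lt_trans one_pos hq
  have hpm : (0:ℝ) < p - 1 := sub_pos.mpr hp
  have hqm : (0:ℝ) < q - 1 := sub_pos.mpr hq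
  have hr0 : 0 < r := hr ▸ div_pos one_pos hpm
  have hs0 : 0 < s := hs ▸ div_pos one_pos hqm
  have hrp : r * p = r + 1 := by rw [hr]; field_simp; ring
  have hsq : s * q = s + 1 := by rw [hs]; field_simp; ring
  have hconjp : (r + 1).HolderConjugate p := by
    rw [Real.holderConjugate_iff]; constructor
    · linarith
    · rw [hr]; field_simp; ring
  have hconjq : (s + 1).HolderConjugate q := by
    rw [Real.holderConjugate_iff]; constructor
    · linarith
    · rw [hs]; field_simp; ring
  have hct0 : ∀ t i, 0 ≤ ct t i := fun t i => (hct t i) ▸ le_max_right _ _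
  have hS1 : ∀ t, 0 ≤ ∑ i, ct t i ^ (r + 1) :=
    fun t => Finset.sum_nonneg fun i _ => Real.rpow_nonneg (hct0 t i) _
  have hNc0 : ∀ t, 0 ≤ Nc t := fun t => (hNc t) ▸ Real.rpow_nonneg (hS1 t) _
  have hNcpos : ∀ t, 0 < Nc t := by
    intro t
    obtain ⟨i, hi⟩ := hneg t
    have hcti : 0 < ct t i := by
      rw [hct]; exact lt_max_iff.mpr (Or.inl (by linarith))
    have hS1pos : 0 < ∑ i, ct t i ^ (r + 1) :=
      Finset.sum_pos' (fun j _ => Real.rpow_nonneg (hct0 t j) _)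
        ⟨i, Finset.mem_univ i, Real.rpow_pos_of_pos hcti _⟩
    rw [hNc]
    exact Real.rpow_pos_of_pos hS1pos _
  have hNcpow : ∀ t, Nc t ^ (r + 1) = ∑ i, ct t i ^ (r + 1) := by
    intro t
    rw [hNc, one_div, Real.rpow_inv_rpow (hS1 t) (by linarith)]
  set S2 := ∑ u, Nc u ^ (s + 1) with hS2def
  have hS2_0 : 0 ≤ S2 :=
    Finset.sum_nonneg fun t _ => Real.rpow_nonneg (hNc0 t) _
  have hσ0 : ∀ t, 0 ≤ σ t := fun t => by
    rw [hσ]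
    exact div_nonneg (mul_nonneg ha.le (Real.rpow_nonneg (hNc0 t) _))
      (Real.rpow_nonneg hS2_0 _)
  have hθh0 : ∀ t i, 0 ≤ θh t i := fun t i => by
    rw [hθh]
    exact div_nonneg (mul_nonneg (hσ0 t) (Real.rpow_nonneg (hct0 t i) _))
      (Real.rpow_nonneg (hNc0 t) _)
  -- lower bound for any feasible θ
  have key : ∀ θ : (t : Fin T) → Fin (nv t) → ℝ, (∀ t i, 0 ≤ θ t i) →
      (∑ t, ((∑ i, |θ t i| ^ p) ^ (1 / p)) ^ q) ^ (1 / q) ≤ a →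
      -(a * S2 ^ (1 / (s + 1))) ≤ ∑ t, ∑ i, c t i * θ t i := by
    intro θ hθ0 hθc
    have h1 : ∀ t, ∑ i, ct t i * θ t i ≤ Nc t * ((∑ i, |θ t i| ^ p) ^ (1 / p)) := by
      intro t
      have habs : (∑ i, |θ t i| ^ p) = ∑ i, θ t i ^ p :=
        Finset.sum_congr rfl fun i _ => by rw [abs_of_nonneg (hθ0 t i)]
      have := Real.inner_le_Lp_mul_Lq_of_nonneg Finset.univ hconjp
        (fun i _ => hct0 t i) (fun i _ => hθ0 t i)
      rw [← hNc t] at this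
      rw [habs]
      exact this
    have h2 : ∑ t, Nc t * ((∑ i, |θ t i| ^ p) ^ (1 / p)) ≤
        S2 ^ (1 / (s + 1)) * (∑ t, ((∑ i, |θ t i| ^ p) ^ (1 / p)) ^ q) ^ (1 / q) :=
      Real.inner_le_Lp_mul_Lq_of_nonneg Finset.univ hconjq
        (fun t _ => hNc0 t)
        (fun t _ => Real.rpow_nonneg (Finset.sum_nonneg fun i _ => by positivity) _)
    have h3 : ∑ t, Nc t * ((∑ i, |θ t i| ^ p) ^ (1 / p)) ≤ S2 ^ (1 / (s + 1)) * a :=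
      h2.trans (mul_le_mul_of_nonneg_left hθc (Real.rpow_nonneg hS2_0 _))
    have h4 : ∑ t, ∑ i, ct t i * θ t i ≤ a * S2 ^ (1 / (s + 1)) := by
      calc ∑ t, ∑ i, ct t i * θ t i
          ≤ ∑ t, Nc t * ((∑ i, |θ t i| ^ p) ^ (1 / p)) :=
            Finset.sum_le_sum fun t _ => h1 t
        _ ≤ S2 ^ (1 / (s + 1)) * a := h3
        _ = a * S2 ^ (1 / (s + 1)) := mul_comm _ _
    have h5 : -(∑ t, ∑ i, ct t i * θ t i) ≤ ∑ t, ∑ i, c t i * θ t i := by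
      rw [← Finset.sum_neg_distrib]
      refine Finset.sum_le_sum fun t _ => ?_
      rw [← Finset.sum_neg_distrib]
      refine Finset.sum_le_sum fun i _ => ?_
      rw [← neg_mul]
      refine mul_le_mul_of_nonneg_right ?_ (hθ0 t i)
      rw [hct]
      have := le_max_left (-(c t i)) 0
      linarith
    linarith
  -- feasibility and value at θh
  have hmemval : ((∀ t i, 0 ≤ θh t i) ∧
      (∑ t, ((∑ i, |θh t i| ^ p) ^ (1 / p)) ^ q) ^ (1 / q) ≤ a) ∧
      ∑ t, ∑ i, c t i * θh t i = -(a * S2 ^ (1 / (s + 1))) := by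
    rcases Nat.eq_zero_or_pos T with hT | hT
    · subst hT
      have hS20 : S2 = 0 := by simp [hS2def]
      refine ⟨⟨hθh0, ?_⟩, ?_⟩
      · simp only [Finset.univ_eq_empty, Finset.sum_empty]
        rw [Real.zero_rpow (ne_of_gt (div_pos one_pos hq0))]
        exact ha.le
      · simp only [Finset.univ_eq_empty, Finset.sum_empty, hS20]
        rw [Real.zero_rpow (ne_of_gt (div_pos one_pos (by linarith : (0:ℝ) < s + 1))),
          mul_zero, neg_zero]
    · have hS2pos : 0 < S2 := by
        rw [hS2def]
        haveI : Nonempty (Fin T) := ⟨⟨0, hT⟩⟩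
        exact Finset.sum_pos (fun t _ => Real.rpow_pos_of_pos (hNcpos t) _)
          Finset.univ_nonempty
      have hA : ∀ t, (∑ i, |θh t i| ^ p) ^ (1 / p) = σ t := by
        intro t
        have hX : 0 ≤ σ t / Nc t ^ r :=
          div_nonneg (hσ0 t) (Real.rpow_nonneg (hNc0 t) _)
        have h1 : ∀ i : Fin (nv t),
            |θh t i| ^ p = (σ t / Nc t ^ r) ^ p * ct t i ^ (r + 1) := by
          intro i
          rw [abs_of_nonneg (hθh0 t i), hθh,
            show σ t * ct t i ^ r / Nc t ^ r = σ t / Nc t ^ r * ct t i ^ r by ring,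
            Real.mul_rpow hX (Real.rpow_nonneg (hct0 t i) _),
            ← Real.rpow_mul (hct0 t i), hrp]
        rw [Finset.sum_congr rfl fun i _ => h1 i, ← Finset.mul_sum, ← hNcpow t,
          Real.mul_rpow (Real.rpow_nonneg hX _) (Real.rpow_nonneg (hNc0 t) _),
          ← Real.rpow_mul hX, mul_one_div_cancel (ne_of_gt hp0), Real.rpow_one,
          ← Real.rpow_mul (hNc0 t),
          show (r + 1) * (1 / p) = r by rw [← hrp]; field_simp,
          div_mul_cancel₀ _ (ne_of_gt (Real.rpow_pos_of_pos (hNcpos t) r))]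
      have hB : ∑ t, σ t ^ q = a ^ q := by
        have h1 : ∀ t, σ t ^ q = a ^ q * Nc t ^ (s + 1) / S2 := by
          intro t
          rw [hσ, Real.div_rpow (mul_nonneg ha.le (Real.rpow_nonneg (hNc0 t) _))
              (Real.rpow_nonneg hS2_0 _),
            Real.mul_rpow ha.le (Real.rpow_nonneg (hNc0 t) _),
            ← Real.rpow_mul (hNc0 t), hsq,
            ← Real.rpow_mul hS2_0, one_div_mul_cancel (ne_of_gt hq0), Real.rpow_one]
        rw [Finset.sum_congr rfl fun t _ => h1 t, ← Finset.sum_div, ← Finset.mul_sum,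
          ← hS2def, mul_div_assoc, div_self (ne_of_gt hS2pos), mul_one]
      have hCt : ∀ t, ∑ i, c t i * θh t i = -(σ t * Nc t) := by
        intro t
        have h1 : ∀ i : Fin (nv t),
            c t i * θh t i = -(σ t / Nc t ^ r * ct t i ^ (r + 1)) := by
          intro i
          rw [hθh]
          rcases le_or_gt 0 (c t i) with h | h
          · have hz : ct t i = 0 := by
              rw [hct]; exact max_eq_right (by linarith)
            rw [hz, Real.zero_rpow (ne_of_gt hr0),
              Real.zero_rpow (by linarith : r + 1 ≠ 0)]
            ring
          · have hcteq : ct t i = -(c t i) := by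
              rw [hct]; exact max_eq_left (by linarith)
            have hctne : ct t i ≠ 0 := by rw [hcteq]; linarith
            rw [Real.rpow_add_one hctne, hcteq]
            ring
        have h2 : σ t / Nc t ^ r * Nc t ^ (r + 1) = σ t * Nc t := by
          rw [Real.rpow_add_one (ne_of_gt (hNcpos t))]
          field_simp [ne_of_gt (Real.rpow_pos_of_pos (hNcpos t) r)]
        rw [Finset.sum_congr rfl fun i _ => h1 i, Finset.sum_neg_distrib,
          ← Finset.mul_sum, ← hNcpow t, h2]
      have hD : ∑ t, σ t * Nc t = a * S2 ^ (1 / (s + 1)) := by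
        have hexp : 1 - 1 / q = 1 / (s + 1) := by
          rw [hs]; field_simp; ring
        have h1 : ∀ t, σ t * Nc t = a * Nc t ^ (s + 1) / S2 ^ (1 / q) := by
          intro t
          rw [hσ, Real.rpow_add_one (ne_of_gt (hNcpos t))]
          ring
        have h2 : S2 / S2 ^ (1 / q) = S2 ^ (1 / (s + 1)) := by
          rw [← hexp, Real.rpow_sub hS2pos, Real.rpow_one]
        rw [Finset.sum_congr rfl fun t _ => h1 t, ← Finset.sum_div, ← Finset.mul_sum,
          ← hS2def, mul_div_assoc, h2]
      refine ⟨⟨hθh0, ?_⟩, ?_⟩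
      · rw [Finset.sum_congr rfl fun t _ => by rw [hA t], hB, one_div,
          Real.rpow_rpow_inv ha.le (ne_of_gt hq0)]
      · rw [Finset.sum_congr rfl fun t _ => hCt t, Finset.sum_neg_distrib, hD]
  refine ⟨⟨⟨θh, hmemval.1, hmemval.2⟩, ?_⟩, hmemval.1, hmemval.2⟩
  rintro x ⟨θ, ⟨h0, hc⟩, rfl⟩
  exact key θ h0 hc
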